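/- With N = 2m+1 odd, ζ = exp(2πi/N), and g(x) = ∏_{j=1}^{N-1}(1-xζ^{-j})^{j/N}, the identity g(x)·g(1/x) = c · (g(1)²/N) · x^{(1-N)/2} · (1-x^N)/(1-x) holds for some N-th root of unity c (depending on x), whenever both sides are defined. -/

import Mathlib

open Complex Real Finset

/-- Sum `1 + 2 + ... + 2m = (2m+1)*m`. -/
lemma sum_aux (m : ℕ) : ∑ j ∈ Finset.range (2 * m), (j + 1) = (2 * m + 1) * m := by
  induction m with
  | zero => simp
  | succ k ih =>
    rw [show 2 * (k + 1) = 2 * k + 1 + 1 by ring, Finset.sum_range_succ, Finset.sum_range_succ,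
      ih]
    ring

/-- Geometric product: for a primitive `N`-th root `v`,
`∏_{j=1}^{N-1} (x - v^j) = ∑_{i<N} x^i`. -/
lemma geom_prod {N : ℕ} (hN : 0 < N) {v : ℂ} (hv : IsPrimitiveRoot v N) (x : ℂ) :
    ∏ j ∈ Finset.range (N - 1), (x - v ^ (j + 1)) = ∑ i ∈ Finset.range N, x ^ i := by
  have hpoly : (Polynomial.X ^ N - Polynomial.C (1 : ℂ)) =
      ∏ i ∈ Finset.range N, (Polynomial.X - Polynomial.C (v ^ i * 1)) :=
    X_pow_sub_C_eq_prod hv hN (one_pow N)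
  have hsplit : ∏ i ∈ Finset.range N, (Polynomial.X - Polynomial.C (v ^ i * 1)) =
      (∏ j ∈ Finset.range (N - 1), (Polynomial.X - Polynomial.C (v ^ (j + 1))))
        * (Polynomial.X - 1) := by
    obtain ⟨n, rfl⟩ : ∃ n, N = n + 1 := ⟨N - 1, by omega⟩
    rw [Finset.prod_range_succ' (fun i => Polynomial.X - Polynomial.C (v ^ i * 1)) n]
    simp
  have hgeom : (∑ i ∈ Finset.range N, (Polynomial.X : Polynomial ℂ) ^ i)
      * (Polynomial.X - 1) = Polynomial.X ^ N - 1 := geom_sum_mul _ N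
  have hXne : (Polynomial.X - 1 : Polynomial ℂ) ≠ 0 := by
    simpa using Polynomial.X_sub_C_ne_zero (1 : ℂ)
  have hP : (∏ j ∈ Finset.range (N - 1), (Polynomial.X - Polynomial.C (v ^ (j + 1))))
      = ∑ i ∈ Finset.range N, (Polynomial.X : Polynomial ℂ) ^ i := by
    apply mul_right_cancel₀ hXne
    rw [← hsplit, ← hpoly, hgeom, Polynomial.C_1]
  have := congrArg (Polynomial.eval x) hP
  simpa [Polynomial.eval_prod, Polynomial.eval_finset_sum] using this

/-- The key factorization lemma. -/
lemma lemA {N m : ℕ} (hN : N = 2 * m + 1) {w : ℂ} (hw : w ^ N = 1) {y : ℂ} (hy : y ≠ 0) :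
    (∏ j ∈ Finset.range (N - 1), (1 - y * w ^ (j + 1)) ^ (j + 1)) *
      (∏ j ∈ Finset.range (N - 1), (1 - y⁻¹ * w ^ (j + 1)) ^ (j + 1))
    = (-1) ^ m * (y ^ (N * m))⁻¹ *
        (∏ j ∈ Finset.range (N - 1), w ^ ((j + 1) * (j + 1))) *
        (∏ j ∈ Finset.range (N - 1), (1 - y * w ^ (j + 1))) ^ N := by
  have hsum : ∑ j ∈ Finset.range (N - 1), (j + 1) = N * m := by
    rw [hN, show 2 * m + 1 - 1 = 2 * m by omega]
    exact sum_aux m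
  -- Step 1: rewrite each factor of the second product
  have step1 : ∀ j ∈ Finset.range (N - 1),
      (1 - y⁻¹ * w ^ (j + 1)) ^ (j + 1)
        = ((-1) ^ (j + 1) * (y⁻¹) ^ (j + 1) * w ^ ((j + 1) * (j + 1)))
            * (1 - y * w ^ (N - 1 - j)) ^ (j + 1) := by
    intro j hj
    rw [Finset.mem_range] at hj
    have hbase : 1 - y⁻¹ * w ^ (j + 1)
        = (-(y⁻¹ * w ^ (j + 1))) * (1 - y * w ^ (N - 1 - j)) := by
      have hww : w ^ (j + 1) * w ^ (N - 1 - j) = 1 := by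
        rw [← pow_add, show j + 1 + (N - 1 - j) = N by omega, hw]
      have hyy : y⁻¹ * y = 1 := inv_mul_cancel₀ hy
      calc 1 - y⁻¹ * w ^ (j + 1)
          = y⁻¹ * y * (w ^ (j + 1) * w ^ (N - 1 - j)) - y⁻¹ * w ^ (j + 1) := by
            rw [hyy, hww]; ring
        _ = (-(y⁻¹ * w ^ (j + 1))) * (1 - y * w ^ (N - 1 - j)) := by ring
    rw [hbase, mul_pow, neg_pow, mul_pow, ← pow_mul]
    ring
  rw [Finset.prod_congr rfl step1]
  rw [Finset.prod_mul_distrib, Finset.prod_mul_distrib, Finset.prod_mul_distrib]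
  rw [Finset.prod_pow_eq_pow_sum, Finset.prod_pow_eq_pow_sum, hsum]
  -- reflection
  have reflect : ∏ j ∈ Finset.range (N - 1), (1 - y * w ^ (N - 1 - j)) ^ (j + 1)
      = ∏ j ∈ Finset.range (N - 1), (1 - y * w ^ (j + 1)) ^ (N - 1 - j) := by
    rw [← Finset.prod_range_reflect (fun j => (1 - y * w ^ (j + 1)) ^ (N - 1 - j)) (N - 1)]
    apply Finset.prod_congr rfl
    intro j hj
    rw [Finset.mem_range] at hj
    have e1 : N - 1 - 1 - j + 1 = N - 1 - j := by omega
    have e2 : N - 1 - (N - 1 - 1 - j) = j + 1 := by omega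
    rw [e1, e2]
  rw [reflect]
  have combine : (∏ j ∈ Finset.range (N - 1), (1 - y * w ^ (j + 1)) ^ (j + 1)) *
      (∏ j ∈ Finset.range (N - 1), (1 - y * w ^ (j + 1)) ^ (N - 1 - j))
      = (∏ j ∈ Finset.range (N - 1), (1 - y * w ^ (j + 1))) ^ N := by
    rw [← Finset.prod_mul_distrib, ← Finset.prod_pow]
    apply Finset.prod_congr rfl
    intro j hj
    rw [Finset.mem_range] at hj
    rw [← pow_add, show j + 1 + (N - 1 - j) = N by omega]
  have hsign : ((-1 : ℂ)) ^ (N * m) = (-1) ^ m := by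
    rw [hN, show (2 * m + 1) * m = 2 * (m * m) + m by ring, pow_add, pow_mul]
    norm_num
  have hinv : ((y⁻¹ : ℂ)) ^ (N * m) = (y ^ (N * m))⁻¹ := inv_pow y (N * m)
  rw [hsign, hinv, ← combine]
  ring

/-- `g(x) = ∏_{j=1}^{N-1} (1 - x·ζ^{-j})^{j/N}`, with principal branch powers. -/
noncomputable def gfun (N : ℕ) (ζ x : ℂ) : ℂ :=
  ∏ j ∈ Finset.range (N - 1), (1 - x * ζ ^ (-((j : ℤ) + 1))) ^ ((((j : ℕ) + 1 : ℕ) : ℂ) / N)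

/-- `gfun` in terms of `w = ζ⁻¹`. -/
lemma gfun_eq (N : ℕ) (ζ y : ℂ) :
    gfun N ζ y = ∏ j ∈ Finset.range (N - 1),
      (1 - y * (ζ⁻¹) ^ (j + 1)) ^ ((((j + 1 : ℕ)) : ℂ) / N) := by
  unfold gfun
  apply Finset.prod_congr rfl
  intro j _
  congr 3
  rw [show (-((j : ℤ) + 1)) = -(((j + 1 : ℕ)) : ℤ) by push_cast; ring, zpow_neg, zpow_natCast,
    ← inv_pow]

/-- `gfun ^ N` removes the fractional powers. -/
lemma gfun_pow {N : ℕ} (hN0 : (N : ℂ) ≠ 0) (ζ y : ℂ) :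
    gfun N ζ y ^ N = ∏ j ∈ Finset.range (N - 1), (1 - y * (ζ⁻¹) ^ (j + 1)) ^ (j + 1) := by
  rw [gfun_eq, ← Finset.prod_pow]
  apply Finset.prod_congr rfl
  intro j _
  rw [← Complex.cpow_nat_mul]
  have h : (N : ℂ) * ((((j + 1 : ℕ)) : ℂ) / N) = (((j + 1 : ℕ)) : ℂ) := by
    field_simp
  rw [h, Complex.cpow_natCast]

/-- For `N = 2m+1` odd and `ζ = exp(2πi/N)`:
`g(x)·g(1/x) = c · (g(1)²/N) · x^{(1-N)/2} · (1-x^N)/(1-x)` for some `N`-th root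
of unity `c` (depending on `x`), whenever both sides are defined. -/
theorem gfun_inversion (N m : ℕ) (hN : N = 2 * m + 1)
    (ζ : ℂ) (hζ : ζ = Complex.exp (2 * π * Complex.I / N))
    (x : ℂ) (hx0 : x ≠ 0) (hx1 : x ≠ 1) :
    ∃ c : ℂ, c ^ N = 1 ∧
      gfun N ζ x * gfun N ζ x⁻¹ =
        c * (gfun N ζ 1 ^ 2 / N) * x ^ ((1 - (N : ℤ)) / 2) * ((1 - x ^ N) / (1 - x)) := by
  have hNpos : 0 < N := by omega
  have hN0 : (N : ℂ) ≠ 0 := Nat.cast_ne_zero.mpr hNpos.ne'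
  have hζprim : IsPrimitiveRoot ζ N := hζ ▸ Complex.isPrimitiveRoot_exp N hNpos.ne'
  set w : ℂ := ζ⁻¹ with hwdef
  have hwprim : IsPrimitiveRoot w N := hζprim.inv
  have hw1 : w ^ N = 1 := hwprim.pow_eq_one
  have hw0 : w ≠ 0 := hwprim.ne_zero hNpos.ne'
  have hQ : ∀ y : ℂ, ∏ j ∈ Finset.range (N - 1), (1 - y * w ^ (j + 1))
      = ∑ i ∈ Finset.range N, y ^ i := by
    intro y
    have h1 : ∀ j ∈ Finset.range (N - 1),
        (1 : ℂ) - y * w ^ (j + 1) = (-(w ^ (j + 1))) * (y - (w⁻¹) ^ (j + 1)) := by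
      intro j _
      have hww : w ^ (j + 1) * (w⁻¹) ^ (j + 1) = 1 := by
        rw [← mul_pow, mul_inv_cancel₀ hw0, one_pow]
      calc (1 : ℂ) - y * w ^ (j + 1)
          = w ^ (j + 1) * (w⁻¹) ^ (j + 1) - y * w ^ (j + 1) := by rw [hww]
        _ = (-(w ^ (j + 1))) * (y - (w⁻¹) ^ (j + 1)) := by ring
    rw [Finset.prod_congr rfl h1, Finset.prod_mul_distrib]
    have hscalar : ∏ j ∈ Finset.range (N - 1), (-(w ^ (j + 1))) = 1 := by
      have h2 : ∀ j ∈ Finset.range (N - 1), (-(w ^ (j + 1))) = (-1) * w ^ (j + 1) := by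
        intro j _; ring
      rw [Finset.prod_congr rfl h2, Finset.prod_mul_distrib, Finset.prod_const,
        Finset.card_range, Finset.prod_pow_eq_pow_sum]
      have hsum : ∑ j ∈ Finset.range (N - 1), (j + 1) = N * m := by
        rw [hN, show 2 * m + 1 - 1 = 2 * m by omega]; exact sum_aux m
      rw [hsum, pow_mul, hw1, one_pow, show N - 1 = 2 * m by omega, pow_mul]
      norm_num
    rw [hscalar, one_mul, geom_prod hNpos hwprim.inv]
  set Qx : ℂ := ∑ i ∈ Finset.range N, x ^ i with hQxdef
  have hgeom : Qx * (x - 1) = x ^ N - 1 := geom_sum_mul x N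
  have h1x : (1 : ℂ) - x ≠ 0 := sub_ne_zero.mpr (Ne.symm hx1)
  have hfrac : (1 - x ^ N) / (1 - x) = Qx := by
    rw [div_eq_iff h1x]
    have h3 : (1 : ℂ) - x ^ N = -(x ^ N - 1) := by ring
    rw [h3, ← hgeom]; ring
  have hexp : x ^ ((1 - (N : ℤ)) / 2) = (x ^ m)⁻¹ := by
    rw [show (1 - (N : ℤ)) / 2 = -(m : ℤ) by omega, zpow_neg, zpow_natCast]
  by_cases hQx0 : Qx = 0
  · -- both sides vanish
    refine ⟨1, one_pow N, ?_⟩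
    have h0 : ∏ j ∈ Finset.range (N - 1), (1 - x * w ^ (j + 1)) = 0 := (hQ x).trans hQx0
    obtain ⟨j, hj, hj0⟩ := Finset.prod_eq_zero_iff.mp h0
    have hgx : gfun N ζ x = 0 := by
      rw [gfun_eq]
      apply Finset.prod_eq_zero hj
      rw [← hwdef, hj0, Complex.zero_cpow]
      exact div_ne_zero (Nat.cast_ne_zero.mpr (Nat.succ_ne_zero j)) hN0
    rw [hgx, hfrac, hQx0]
    ring
  · have hQprod0 : (∏ j ∈ Finset.range (N - 1), (1 - x * w ^ (j + 1))) ≠ 0 := by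
      rw [hQ x]; exact hQx0
    have hg1ne : gfun N ζ 1 ≠ 0 := by
      rw [gfun_eq]
      apply Finset.prod_ne_zero_iff.mpr
      intro j hj
      rw [Finset.mem_range] at hj
      intro h
      rw [Complex.cpow_eq_zero_iff] at h
      have hbase := h.1
      rw [one_mul, sub_eq_zero] at hbase
      exact hwprim.pow_ne_one_of_pos_of_lt (Nat.succ_ne_zero j) (by omega) hbase.symm
    set D : ℂ := gfun N ζ 1 ^ 2 / N * (x ^ m)⁻¹ * Qx with hDdef
    have hDne : D ≠ 0 := by
      apply mul_ne_zero (mul_ne_zero _ _) hQx0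
      · exact div_ne_zero (pow_ne_zero 2 hg1ne) hN0
      · exact inv_ne_zero (pow_ne_zero m hx0)
    refine ⟨gfun N ζ x * gfun N ζ x⁻¹ / D, ?_, ?_⟩
    · -- the N-th power is 1
      rw [div_pow, div_eq_one_iff_eq (pow_ne_zero N hDne)]
      set W : ℂ := ∏ j ∈ Finset.range (N - 1), w ^ ((j + 1) * (j + 1)) with hWdef
      have hLN : (gfun N ζ x * gfun N ζ x⁻¹) ^ N
          = (-1) ^ m * (x ^ (N * m))⁻¹ * W * Qx ^ N := by
        rw [mul_pow, gfun_pow hN0, gfun_pow hN0, ← hwdef, lemA hN hw1 hx0, hQ x]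
      have hQ1 : (∏ j ∈ Finset.range (N - 1), (1 - (1 : ℂ) * w ^ (j + 1))) = (N : ℂ) := by
        rw [hQ 1]; simp
      have hg1N : gfun N ζ 1 ^ N
          = ∏ j ∈ Finset.range (N - 1), (1 - (1 : ℂ) * w ^ (j + 1)) ^ (j + 1) := by
        rw [gfun_pow hN0, ← hwdef]
      have hA1 := lemA hN hw1 (one_ne_zero : (1 : ℂ) ≠ 0)
      rw [inv_one, hQ1, one_pow, inv_one] at hA1
      have hsq : (gfun N ζ 1 ^ N) ^ 2 = (-1) ^ m * W * (N : ℂ) ^ N := by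
        rw [hg1N, sq, hA1, ← hWdef]
        ring
      have hDN : D ^ N = (-1) ^ m * (x ^ (N * m))⁻¹ * W * Qx ^ N := by
        have e1 : D ^ N = (gfun N ζ 1 ^ 2) ^ N / (N : ℂ) ^ N * ((x ^ m)⁻¹) ^ N * Qx ^ N := by
          rw [hDdef, mul_pow, mul_pow, div_pow]
        have e2 : (gfun N ζ 1 ^ 2) ^ N = (gfun N ζ 1 ^ N) ^ 2 := by
          rw [← pow_mul, ← pow_mul, mul_comm]
        have e3 : ((x ^ m)⁻¹) ^ N = (x ^ (N * m))⁻¹ := by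
          rw [inv_pow, ← pow_mul, Nat.mul_comm m N]
        have hNN : ((N : ℂ)) ^ N ≠ 0 := pow_ne_zero N hN0
        rw [e1, e2, e3, hsq, mul_div_assoc, div_self hNN, mul_one]
        ring
      rw [hLN, hDN]
    · -- the defining equation
      rw [hfrac, hexp]
      have hD : gfun N ζ x * gfun N ζ x⁻¹ / D * (gfun N ζ 1 ^ 2 / N) * (x ^ m)⁻¹ * Qx
          = gfun N ζ x * gfun N ζ x⁻¹ / D * D := by
        rw [hDdef]; ring
      rw [hD, div_mul_cancel₀ _ hDne]
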